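/- Let N ∈ F^{m×m} be nilpotent with N^ν = 0 and let h : [0,τ] → F^m be ν-times continuously differentiable. Then w : [0,τ] → F^m defined by w(t) = −∑_{k=0}^{ν−1} N^k h^{(k)}(t) is the unique continuously differentiable solution of N ẇ(t) = w(t) + h(t) on [0,τ]. -/

import Mathlib

/-- The fast subsystem `N ẇ = w + h` with `N^ν = 0` and `h` ν-times continuously
differentiable has `w(t) = -∑_{k<ν} N^k h^(k)(t)` as its unique C¹ solution on `[0, τ]`. -/
theorem fast_subsystem_unique_solution {F : Type*} [RCLike F] {m ν : ℕ}
    (N : Matrix (Fin m) (Fin m) F) (hN : N ^ ν = 0)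
    {τ : ℝ} (hτ : 0 < τ) (h : ℝ → Fin m → F) (hh : ContDiff ℝ (ν : ℕ∞) h)
    (w : ℝ → Fin m → F)
    (hw : w = fun t => -∑ k ∈ Finset.range ν, (N ^ k).mulVec (iteratedDeriv k h t)) :
    ContDiff ℝ 1 w ∧
    (∀ t ∈ Set.Icc (0 : ℝ) τ, N.mulVec (deriv w t) = w t + h t) ∧
    ∀ u : ℝ → Fin m → F, ContDiff ℝ 1 u →
      (∀ t ∈ Set.Icc (0 : ℝ) τ, N.mulVec (deriv u t) = u t + h t) →
      ∀ t ∈ Set.Icc (0 : ℝ) τ, u t = w t := by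
  -- continuous ℝ-linear map given by mulVec by a fixed matrix
  set L : Matrix (Fin m) (Fin m) F → ((Fin m → F) →L[ℝ] (Fin m → F)) :=
    fun M => (LinearMap.toContinuousLinearMap M.mulVecLin).restrictScalars ℝ with hL
  have hLapp : ∀ (M : Matrix (Fin m) (Fin m) F) v, L M v = M.mulVec v := fun M v => rfl
  -- smoothness of iterated derivatives
  have hsm : ∀ k, k + 1 ≤ ν → ContDiff ℝ 1 (iteratedDeriv k h) := by
    intro k hk
    rw [iteratedDeriv_eq_iterate]
    apply ContDiff.iterate_deriv' 1 k
    exact hh.of_le (by exact_mod_cast by omega)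
  have hder : ∀ k, k + 1 ≤ ν → ∀ t : ℝ,
      HasDerivAt (iteratedDeriv k h) (iteratedDeriv (k + 1) h t) t := by
    intro k hk t
    rw [iteratedDeriv_succ]
    exact ((hsm k hk).differentiable one_ne_zero t).hasDerivAt.congr_deriv rfl
  -- w is C¹
  have hwC1 : ContDiff ℝ 1 w := by
    rw [hw]
    apply ContDiff.neg
    apply ContDiff.sum
    intro k hk
    exact ((L (N ^ k)).contDiff).comp (hsm k (Finset.mem_range.mp hk))
  -- derivative of w
  have hwderiv : ∀ t : ℝ, HasDerivAt w
      (-∑ k ∈ Finset.range ν, (N ^ k).mulVec (iteratedDeriv (k + 1) h t)) t := by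
    intro t
    rw [hw]
    apply HasDerivAt.neg
    apply HasDerivAt.fun_sum
    intro k hk
    have := ((L (N ^ k)).hasFDerivAt).comp_hasDerivAt t
      (hder k (Finset.mem_range.mp hk) t)
    exact this
  have hmulVec_sum : ∀ (M : Matrix (Fin m) (Fin m) F) (s : Finset ℕ) (f : ℕ → Fin m → F),
      M.mulVec (∑ k ∈ s, f k) = ∑ k ∈ s, M.mulVec (f k) := by
    intro M s f
    exact map_sum M.mulVecLin f s
  have hode_w : ∀ t : ℝ, N.mulVec (deriv w t) = w t + h t := by
    intro t
    rw [(hwderiv t).deriv]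
    have key : N.mulVec (-∑ k ∈ Finset.range ν, (N ^ k).mulVec (iteratedDeriv (k + 1) h t))
        = -∑ k ∈ Finset.range ν, (N ^ (k + 1)).mulVec (iteratedDeriv (k + 1) h t) := by
      rw [Matrix.mulVec_neg, hmulVec_sum]
      congr 1
      apply Finset.sum_congr rfl
      intro k _
      rw [Matrix.mulVec_mulVec, ← pow_succ']
    rw [key]
    have h1 := Finset.sum_range_succ' (fun k => (N ^ k).mulVec (iteratedDeriv k h t)) ν
    rw [Finset.sum_range_succ, hN] at h1
    simp only [Matrix.zero_mulVec, add_zero] at h1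
    rw [hw]
    simp only [neg_neg]
    rw [h1]
    simp [iteratedDeriv_zero, Matrix.one_mulVec]
  refine ⟨hwC1, fun t _ => hode_w t, ?_⟩
  · -- uniqueness
    intro u hu hueq t ht
    set d : ℝ → Fin m → F := fun s => u s - w s with hd
    have hdC1 : ContDiff ℝ 1 d := hu.sub hwC1
    have hddiff : Differentiable ℝ d := hdC1.differentiable one_ne_zero
    have hdode : ∀ s ∈ Set.Icc (0 : ℝ) τ, N.mulVec (deriv d s) = d s := by
      intro s hs
      have hds : deriv d s = deriv u s - deriv w s :=
        deriv_sub (hu.differentiable one_ne_zero s) (hwC1.differentiable one_ne_zero s)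
      rw [hds, Matrix.mulVec_sub, hueq s hs, hode_w s, hd]
      abel_nf
    -- downward induction: N^(ν-j) d = 0 on Icc
    have main : ∀ j, ∀ s ∈ Set.Icc (0 : ℝ) τ, (N ^ (ν - j)).mulVec (d s) = 0 := by
      intro j
      induction j with
      | zero => intro s _; simp [hN]
      | succ j IH =>
        by_cases hj : ν ≤ j
        · intro s hs
          have e : ν - (j + 1) = ν - j := by omega
          rw [e]; exact IH s hs
        · set i := ν - (j + 1) with hi
          have e : ν - j = i + 1 := by omega
          rw [e] at IH
          -- first on the open interval
          have hIoo : ∀ s ∈ Set.Ioo (0 : ℝ) τ, (N ^ i).mulVec (d s) = 0 := by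
            intro s hs
            have hrel : (N ^ i).mulVec (d s) = (N ^ (i + 1)).mulVec (deriv d s) := by
              rw [← hdode s (Set.Ioo_subset_Icc_self hs), Matrix.mulVec_mulVec, ← pow_succ]
            rw [hrel]
            have hg : HasDerivAt (fun x => (N ^ (i + 1)).mulVec (d x))
                ((N ^ (i + 1)).mulVec (deriv d s)) s := by
              have := ((L (N ^ (i + 1))).hasFDerivAt).comp_hasDerivAt s (hddiff s).hasDerivAt
              exact this
            have hev : (fun x => (N ^ (i + 1)).mulVec (d x)) =ᶠ[nhds s] (fun _ => (0 : Fin m → F)) := by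
              filter_upwards [Ioo_mem_nhds hs.1 hs.2] with x hx
              exact IH x (Set.Ioo_subset_Icc_self hx)
            have := hg.deriv
            rw [hev.deriv_eq] at this
            simp only [deriv_const'] at this
            exact this.symm
          -- extend by continuity
          have hcont : Continuous fun s => (N ^ i).mulVec (d s) := by
            have := ((L (N ^ i)).continuous).comp hdC1.continuous
            exact this
          have heq : Set.EqOn (fun s => (N ^ i).mulVec (d s)) (fun _ => (0 : Fin m → F))
              (closure (Set.Ioo (0 : ℝ) τ)) :=
            Set.EqOn.closure (fun x hx => hIoo x hx) hcont continuous_const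
          intro s hs
          have : s ∈ closure (Set.Ioo (0 : ℝ) τ) := by
            rw [closure_Ioo hτ.ne]; exact hs
          exact heq this
    have := main ν t ht
    simp only [Nat.sub_self, pow_zero, Matrix.one_mulVec] at this
    exact sub_eq_zero.mp this
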